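/- Let $\Sigma_{\mathbb{R}}$ be a nontrivial $p \times p$ matrix measure on $[-2,2]$ and $\Sigma_{\mathbb{T}}$ the symmetric measure on the unit circle with $\mathrm{Sz}(\Sigma_{\mathbb{T}}) = \Sigma_{\mathbb{R}}$, where $\mathrm{Sz}$ is induced by $z \mapsto z + z^{-1}$. If $\hat{P}_n$ is the $n$-th right monic orthogonal polynomial for $\Sigma_{\mathbb{R}}$ and $\mathbf{\Phi}_{2n}$ the $2n$-th right monic orthogonal polynomial for $\Sigma_{\mathbb{T}}$, then $\hat{P}_n(z + z^{-1}) = [z^{-n}\mathbf{\Phi}_{2n}(z) + z^n \mathbf{\Phi}_{2n}(z^{-1})] \boldsymbol{\tau}_n^{-1}$, where $\boldsymbol{\tau}_n = \mathbf{1} + \mathbf{\Phi}_{2n}(0)$. -/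

import Mathlib

open Matrix MeasureTheory Complex
open scoped ComplexOrder

set_option linter.unusedSectionVars false
set_option maxHeartbeats 1000000

namespace YM
noncomputable section

def zc (θ : ℝ) : ℂ := Complex.exp (θ * Complex.I)

lemma zc_ne_zero (θ : ℝ) : zc θ ≠ 0 := Complex.exp_ne_zero _

lemma norm_zc (θ : ℝ) : ‖zc θ‖ = 1 := by
  simp [zc, Complex.norm_exp]

lemma zc_neg (θ : ℝ) : zc (-θ) = (zc θ)⁻¹ := by
  rw [zc, zc, ← Complex.exp_neg]
  push_cast
  ring_nf

lemma conj_zc (θ : ℝ) : (starRingEnd ℂ) (zc θ) = (zc θ)⁻¹ := by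
  rw [zc, ← Complex.exp_conj, ← Complex.exp_neg]
  congr 1
  simp [Complex.conj_ofReal]

lemma norm_zc_zpow (θ : ℝ) (m : ℤ) : ‖zc θ ^ m‖ = 1 := by
  rw [norm_zpow, norm_zc, _root_.one_zpow]

lemma conj_zc_pow (θ : ℝ) (k : ℕ) : (starRingEnd ℂ) (zc θ ^ k) = zc θ ^ (-(k:ℤ)) := by
  rw [map_pow, conj_zc, ← zpow_natCast (zc θ)⁻¹, _root_.inv_zpow, ← _root_.zpow_neg]

def xr (θ : ℝ) : ℂ := ((2 * Real.cos θ : ℝ) : ℂ)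

lemma xr_eq (θ : ℝ) : xr θ = zc θ + (zc θ)⁻¹ := by
  have h : (Real.cos θ : ℂ) = Complex.cos θ := (Complex.ofReal_cos θ)
  rw [xr, zc, ← Complex.exp_neg]
  push_cast
  rw [Complex.cos]
  ring_nf

lemma conj_xr_pow (θ : ℝ) (k : ℕ) : (starRingEnd ℂ) (xr θ ^ k) = xr θ ^ k := by
  rw [map_pow, xr, Complex.conj_ofReal]

lemma norm_xr (θ : ℝ) : ‖xr θ‖ ≤ 2 := by
  rw [xr]
  rw [Complex.norm_real]
  have := Real.abs_cos_le_one θ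
  rw [Real.norm_eq_abs, abs_mul]
  have h2 : |(2:ℝ)| = 2 := by norm_num
  rw [h2]
  nlinarith [abs_nonneg (Real.cos θ)]

lemma cont_zc_zpow (m : ℤ) : Continuous fun θ : ℝ => zc θ ^ m := by
  apply Continuous.zpow₀
  · exact Complex.continuous_exp.comp (by continuity)
  · intro a; exact Or.inl (zc_ne_zero a)

end
end YM

namespace YM
noncomputable section
open MeasureTheory Matrix Complex

variable {p : ℕ} (ν : Measure ℝ) (g : ℝ → Matrix (Fin p) (Fin p) ℂ)

/-- matrix moment against a scalar weight -/
def wInt (w : ℝ → ℂ) : Matrix (Fin p) (Fin p) ℂ :=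
  Matrix.of fun a b => ∫ θ, w θ * g θ a b ∂ν

/-- circle moments -/
def mu (m : ℤ) : Matrix (Fin p) (Fin p) ℂ := wInt ν g (fun θ => zc θ ^ m)

lemma mu_apply (m : ℤ) (a b : Fin p) : mu ν g m a b = ∫ θ, zc θ ^ m * g θ a b ∂ν := rfl

variable [IsFiniteMeasure ν]

structure GoodW (ν : Measure ℝ) (w : ℝ → ℂ) : Prop where
  cont : Continuous w
  bdd : ∃ C : ℝ, ∀ θ, ‖w θ‖ ≤ C

lemma goodW_zpow (m : ℤ) : GoodW ν (fun θ => zc θ ^ m) :=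
  ⟨cont_zc_zpow m, ⟨1, fun θ => le_of_eq (norm_zc_zpow θ m)⟩⟩

lemma cont_xr : Continuous xr := by
  unfold xr; continuity

lemma goodW_xr_pow (s : ℕ) : GoodW ν (fun θ => xr θ ^ s) :=
  ⟨cont_xr.pow s, ⟨2 ^ s, fun θ => by
    rw [norm_pow]
    exact pow_le_pow_left₀ (norm_nonneg _) (norm_xr θ) s⟩⟩

lemma goodW_mul {w w' : ℝ → ℂ} (h : GoodW ν w) (h' : GoodW ν w') :
    GoodW ν (fun θ => w θ * w' θ) := by
  obtain ⟨C, hC⟩ := h.bdd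
  obtain ⟨C', hC'⟩ := h'.bdd
  refine ⟨h.cont.mul h'.cont, ⟨C * C', fun θ => ?_⟩⟩
  rw [norm_mul]
  have h0 : (0:ℝ) ≤ ‖w θ‖ := norm_nonneg _
  have h1 : (0:ℝ) ≤ ‖w' θ‖ := norm_nonneg _
  nlinarith [hC θ, hC' θ]

variable {ν}

lemma int_w {w : ℝ → ℂ} (hw : GoodW ν w)
    (hgInt : ∀ a b : Fin p, Integrable (fun θ : ℝ => g θ a b) ν) (a b : Fin p) :
    Integrable (fun θ => w θ * g θ a b) ν :=
  (hgInt a b).bdd_mul hw.cont.aestronglyMeasurable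
    (Filter.Eventually.of_forall hw.bdd.choose_spec)

lemma entry_eq (w : ℝ → ℂ) (A B : Matrix (Fin p) (Fin p) ℂ) (a b : Fin p) (θ : ℝ) :
    (w θ • (A * g θ * B)) a b
      = ∑ v : Fin p, ∑ u : Fin p, A a u * B v b * (w θ * g θ u v) := by
  simp only [Matrix.smul_apply, Matrix.mul_apply, smul_eq_mul, Finset.mul_sum, Finset.sum_mul]
  refine Finset.sum_congr rfl fun v _ => Finset.sum_congr rfl fun u _ => by ring

lemma int_w_entry {w : ℝ → ℂ} (hw : GoodW ν w)
    (hgInt : ∀ a b : Fin p, Integrable (fun θ : ℝ => g θ a b) ν)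
    (A B : Matrix (Fin p) (Fin p) ℂ) (a b : Fin p) :
    Integrable (fun θ => (w θ • (A * g θ * B)) a b) ν := by
  simp only [entry_eq g w A B a b]
  exact integrable_finset_sum _ fun v _ => integrable_finset_sum _ fun u _ =>
    ((int_w g hw hgInt u v).const_mul _)

lemma integral_w_entry {w : ℝ → ℂ} (hw : GoodW ν w)
    (hgInt : ∀ a b : Fin p, Integrable (fun θ : ℝ => g θ a b) ν)
    (A B : Matrix (Fin p) (Fin p) ℂ) (a b : Fin p) :
    ∫ θ, (w θ • (A * g θ * B)) a b ∂ν = (A * wInt ν g w * B) a b := by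
  simp only [entry_eq g w A B a b]
  rw [integral_finset_sum _ fun v _ => integrable_finset_sum _ fun u _ =>
    ((int_w g hw hgInt u v).const_mul _)]
  have : ∀ v ∈ (Finset.univ : Finset (Fin p)),
      ∫ θ, (∑ u : Fin p, A a u * B v b * (w θ * g θ u v)) ∂ν
        = ∑ u : Fin p, A a u * B v b * (wInt ν g w u v) := by
    intro v _
    rw [integral_finset_sum _ fun u _ => ((int_w g hw hgInt u v).const_mul _)]
    exact Finset.sum_congr rfl fun u _ => integral_const_mul _ _
  rw [Finset.sum_congr rfl this]
  simp only [Matrix.mul_apply, Finset.sum_mul, Finset.mul_sum]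
  refine Finset.sum_congr rfl fun v _ => Finset.sum_congr rfl fun u _ => by ring

lemma integral_w_sum_entry {ι : Type*} (s : Finset ι) {w : ι → ℝ → ℂ}
    (hw : ∀ i ∈ s, GoodW ν (w i))
    (hgInt : ∀ a b : Fin p, Integrable (fun θ : ℝ => g θ a b) ν)
    (A B : ι → Matrix (Fin p) (Fin p) ℂ) (a b : Fin p) :
    ∫ θ, (∑ i ∈ s, w i θ • (A i * g θ * B i)) a b ∂ν
      = (∑ i ∈ s, A i * wInt ν g (w i) * B i) a b := by
  simp only [Matrix.sum_apply]
  rw [integral_finset_sum _ fun i hi => int_w_entry g (hw i hi) hgInt (A i) (B i) a b]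
  exact Finset.sum_congr rfl fun i hi => integral_w_entry g (hw i hi) hgInt (A i) (B i) a b

end
end YM

namespace YM
noncomputable section
open MeasureTheory Matrix Complex Polynomial
set_option linter.unusedSectionVars false

variable {p : ℕ} {ν : Measure ℝ} (g : ℝ → Matrix (Fin p) (Fin p) ℂ) [IsFiniteMeasure ν]

lemma mu_even (hν : Measure.map (fun θ : ℝ => -θ) ν = ν) (hgsym : ∀ θ, g (-θ) = g θ)
    (hgInt : ∀ a b : Fin p, Integrable (fun θ : ℝ => g θ a b) ν) (m : ℤ) :
    mu ν g m = mu ν g (-m) := by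
  ext a b
  rw [mu_apply, mu_apply]
  have hmeas : AEStronglyMeasurable (fun θ => zc θ ^ m * g θ a b)
      (Measure.map (fun θ : ℝ => -θ) ν) := by
    rw [hν]; exact (int_w g (goodW_zpow ν m) hgInt a b).aestronglyMeasurable
  calc ∫ θ, zc θ ^ m * g θ a b ∂ν
      = ∫ θ, zc θ ^ m * g θ a b ∂(Measure.map (fun θ : ℝ => -θ) ν) := by rw [hν]
    _ = ∫ θ, zc (-θ) ^ m * g (-θ) a b ∂ν := integral_map measurable_neg.aemeasurable hmeas
    _ = ∫ θ, zc θ ^ (-m) * g θ a b ∂ν := by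
        refine integral_congr_ae (Filter.Eventually.of_forall fun θ => ?_)
        dsimp only
        rw [zc_neg, hgsym, _root_.inv_zpow, ← _root_.zpow_neg]

/-- real moments -/
def Xm (ν : Measure ℝ) (g : ℝ → Matrix (Fin p) (Fin p) ℂ) (s : ℕ) : Matrix (Fin p) (Fin p) ℂ :=
  wInt ν g (fun θ => xr θ ^ s)

/-- mixed moments (z^m x^k) expressed through circle moments -/
def Tm (ν : Measure ℝ) (g : ℝ → Matrix (Fin p) (Fin p) ℂ) (m : ℤ) (k : ℕ) :
    Matrix (Fin p) (Fin p) ℂ :=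
  ∑ i ∈ Finset.range (k + 1), ((k.choose i : ℕ) : ℂ) • mu ν g (m + k - 2 * i)

lemma T_even (hν : Measure.map (fun θ : ℝ => -θ) ν = ν) (hgsym : ∀ θ, g (-θ) = g θ)
    (hgInt : ∀ a b : Fin p, Integrable (fun θ : ℝ => g θ a b) ν) (m : ℤ) (k : ℕ) :
    Tm ν g m k = Tm ν g (-m) k := by
  rw [Tm, Tm, ← Finset.sum_range_reflect]
  refine Finset.sum_congr rfl fun i hi => ?_
  have hik : i ≤ k := Nat.lt_succ_iff.mp (Finset.mem_range.mp hi)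
  simp only [Nat.add_sub_cancel]
  rw [Nat.choose_symm hik]
  congr 1
  have hc : ((k - i : ℕ) : ℤ) = (k : ℤ) - i := by omega
  rw [hc]
  have he : m + (k : ℤ) - 2 * ((k : ℤ) - i) = -(-m + (k : ℤ) - 2 * i) := by ring
  rw [he, ← mu_even g hν hgsym hgInt]

lemma zx_expand (θ : ℝ) (m : ℤ) (k : ℕ) :
    zc θ ^ m * xr θ ^ k
      = ∑ i ∈ Finset.range (k + 1), ((k.choose i : ℕ) : ℂ) * zc θ ^ (m + 2 * i - k) := by
  have hz := zc_ne_zero θ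
  rw [xr_eq, add_pow, Finset.mul_sum]
  refine Finset.sum_congr rfl fun i hi => ?_
  have hik : i ≤ k := Nat.lt_succ_iff.mp (Finset.mem_range.mp hi)
  have h1 : zc θ ^ i * (zc θ)⁻¹ ^ (k - i) = zc θ ^ ((2 * i : ℤ) - k) := by
    rw [inv_pow, ← zpow_natCast (zc θ) i, ← zpow_natCast (zc θ) (k - i), ← _root_.zpow_neg,
      ← zpow_add₀ hz]
    congr 1
    have hc : ((k - i : ℕ) : ℤ) = (k : ℤ) - i := by omega
    rw [hc]; ring
  calc zc θ ^ m * (zc θ ^ i * (zc θ)⁻¹ ^ (k - i) * ((k.choose i : ℕ) : ℂ))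
      = ((k.choose i : ℕ) : ℂ) * (zc θ ^ m * (zc θ ^ i * (zc θ)⁻¹ ^ (k - i))) := by ring
    _ = ((k.choose i : ℕ) : ℂ) * zc θ ^ (m + 2 * i - k) := by
        rw [h1, ← zpow_add₀ hz]; congr 2; ring

lemma T_int (hgInt : ∀ a b : Fin p, Integrable (fun θ : ℝ => g θ a b) ν) (m : ℤ) (k : ℕ) :
    Tm ν g m k = wInt ν g (fun θ => zc θ ^ m * xr θ ^ k) := by
  ext a b
  show (∑ i ∈ Finset.range (k+1), ((k.choose i : ℕ) : ℂ) • mu ν g (m + k - 2*i)) a b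
    = ∫ θ, (zc θ ^ m * xr θ ^ k) * g θ a b ∂ν
  have hint : ∀ i : ℕ, Integrable (fun θ => ((k.choose i : ℕ) : ℂ) * (zc θ ^ (m + 2*i - k) * g θ a b)) ν :=
    fun i => (int_w g (goodW_zpow ν _) hgInt a b).const_mul _
  calc (∑ i ∈ Finset.range (k+1), ((k.choose i : ℕ) : ℂ) • mu ν g (m + k - 2*i)) a b
      = ∑ i ∈ Finset.range (k+1), ((k.choose i : ℕ) : ℂ) * (mu ν g (m + k - 2*i)) a b := by
        simp [Matrix.sum_apply]
    _ = ∑ i ∈ Finset.range (k+1), ((k.choose i : ℕ) : ℂ) * (mu ν g (m + 2*i - k)) a b := by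
        rw [← Finset.sum_range_reflect]
        refine Finset.sum_congr rfl fun i hi => ?_
        have hik : i ≤ k := Nat.lt_succ_iff.mp (Finset.mem_range.mp hi)
        simp only [Nat.add_sub_cancel]
        rw [Nat.choose_symm hik]
        congr 2
        have hc : ((k - i : ℕ) : ℤ) = (k : ℤ) - i := by omega
        rw [hc]; ring
    _ = ∑ i ∈ Finset.range (k+1), ∫ θ, ((k.choose i : ℕ) : ℂ) * (zc θ ^ (m + 2*i - k) * g θ a b) ∂ν := by
        refine Finset.sum_congr rfl fun i _ => ?_
        rw [mu_apply, integral_const_mul]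
    _ = ∫ θ, ∑ i ∈ Finset.range (k+1), ((k.choose i : ℕ) : ℂ) * (zc θ ^ (m + 2*i - k) * g θ a b) ∂ν := by
        rw [integral_finset_sum _ fun i _ => hint i]
    _ = ∫ θ, (zc θ ^ m * xr θ ^ k) * g θ a b ∂ν := by
        refine integral_congr_ae (Filter.Eventually.of_forall fun θ => ?_)
        dsimp only
        rw [zx_expand, Finset.sum_mul]
        exact Finset.sum_congr rfl fun i _ => by ring

lemma dickson_natDegree_le : ∀ m : ℕ, (Polynomial.dickson 1 (1 : ℂ) m).natDegree ≤ m
  | 0 => by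
      rw [Polynomial.dickson_zero]
      norm_num
  | 1 => by
      rw [Polynomial.dickson_one]
      exact Polynomial.natDegree_X_le
  | (m + 2) => by
      rw [Polynomial.dickson_add_two]
      refine le_trans (Polynomial.natDegree_sub_le _ _) ?_
      rw [max_le_iff]
      constructor
      · refine le_trans (Polynomial.natDegree_mul_le) ?_
        have := dickson_natDegree_le (m + 1)
        simp [Polynomial.natDegree_X]
        omega
      · refine le_trans (Polynomial.natDegree_mul_le) ?_
        have := dickson_natDegree_le m
        simp [Polynomial.natDegree_C]
        omega

lemma zpow_add_inv_eq (m : ℕ) (z : ℂ) (hz : z ≠ 0) :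
    z ^ (m : ℤ) + z ^ (-(m : ℤ))
      = ∑ s ∈ Finset.range (m + 1),
          (Polynomial.dickson 1 (1 : ℂ) m).coeff s * (z + z⁻¹) ^ s := by
  have h := Polynomial.dickson_one_one_eval_add_inv z z⁻¹ (mul_inv_cancel₀ hz) m
  rw [Polynomial.eval_eq_sum_range'
    (lt_of_le_of_lt (dickson_natDegree_le m) (Nat.lt_succ_self m))] at h
  have e1 : z ^ (m : ℤ) = z ^ m := zpow_natCast z m
  have e2 : z ^ (-(m : ℤ)) = z⁻¹ ^ m := by
    rw [_root_.zpow_neg, e1, ← inv_pow]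
  rw [e1, e2]
  exact h.symm

end
end YM

namespace YM
noncomputable section
open MeasureTheory Matrix Complex Polynomial
set_option linter.unusedSectionVars false

variable {p : ℕ} {ν : Measure ℝ} (g : ℝ → Matrix (Fin p) (Fin p) ℂ) [IsFiniteMeasure ν]

lemma hTsum (hgInt : ∀ a b : Fin p, Integrable (fun θ : ℝ => g θ a b) ν) (m k : ℕ) :
    Tm ν g (m : ℤ) k + Tm ν g (-(m : ℤ)) k
      = ∑ s ∈ Finset.range (m + 1),
          (Polynomial.dickson 1 (1 : ℂ) m).coeff s • Xm ν g (s + k) := by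
  rw [T_int g hgInt, T_int g hgInt]
  ext a b
  have hint : ∀ (mm : ℤ) (kk : ℕ), Integrable (fun θ => (zc θ ^ mm * xr θ ^ kk) * g θ a b) ν :=
    fun mm kk => int_w g (goodW_mul ν (goodW_zpow ν mm) (goodW_xr_pow ν kk)) hgInt a b
  have hxint : ∀ s : ℕ, Integrable
      (fun θ => (Polynomial.dickson 1 (1 : ℂ) m).coeff s * (xr θ ^ (s + k) * g θ a b)) ν :=
    fun s => ((int_w g (goodW_xr_pow ν (s + k)) hgInt a b).const_mul _)
  show (∫ θ, (zc θ ^ (m:ℤ) * xr θ ^ k) * g θ a b ∂ν) + (∫ θ, (zc θ ^ (-(m:ℤ)) * xr θ ^ k) * g θ a b ∂ν)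
      = (∑ s ∈ Finset.range (m + 1), (Polynomial.dickson 1 (1 : ℂ) m).coeff s • Xm ν g (s + k)) a b
  rw [← integral_add (hint (m:ℤ) k) (hint (-(m:ℤ)) k)]
  calc ∫ θ, ((zc θ ^ (m:ℤ) * xr θ ^ k) * g θ a b + (zc θ ^ (-(m:ℤ)) * xr θ ^ k) * g θ a b) ∂ν
      = ∫ θ, ∑ s ∈ Finset.range (m + 1),
          (Polynomial.dickson 1 (1 : ℂ) m).coeff s * (xr θ ^ (s + k) * g θ a b) ∂ν := by
        refine integral_congr_ae (Filter.Eventually.of_forall fun θ => ?_)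
        dsimp only
        have hzz : zc θ ^ (m:ℤ) + zc θ ^ (-(m:ℤ))
            = ∑ s ∈ Finset.range (m + 1),
                (Polynomial.dickson 1 (1 : ℂ) m).coeff s * (zc θ + (zc θ)⁻¹) ^ s :=
          zpow_add_inv_eq m (zc θ) (zc_ne_zero θ)
        rw [← xr_eq] at hzz
        calc (zc θ ^ (m:ℤ) * xr θ ^ k) * g θ a b + (zc θ ^ (-(m:ℤ)) * xr θ ^ k) * g θ a b
            = (zc θ ^ (m:ℤ) + zc θ ^ (-(m:ℤ))) * (xr θ ^ k * g θ a b) := by ring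
          _ = (∑ s ∈ Finset.range (m + 1),
                (Polynomial.dickson 1 (1 : ℂ) m).coeff s * xr θ ^ s) * (xr θ ^ k * g θ a b) := by
              rw [hzz]
          _ = ∑ s ∈ Finset.range (m + 1),
                (Polynomial.dickson 1 (1 : ℂ) m).coeff s * (xr θ ^ (s + k) * g θ a b) := by
              rw [Finset.sum_mul]
              exact Finset.sum_congr rfl fun s _ => by rw [pow_add]; ring
    _ = ∑ s ∈ Finset.range (m + 1),
          (Polynomial.dickson 1 (1 : ℂ) m).coeff s * (Xm ν g (s + k) a b) := by
        rw [integral_finset_sum _ fun s _ => hxint s]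
        exact Finset.sum_congr rfl fun s _ => by rw [integral_const_mul]; rfl
    _ = (∑ s ∈ Finset.range (m + 1), (Polynomial.dickson 1 (1 : ℂ) m).coeff s • Xm ν g (s + k)) a b := by
        simp [Matrix.sum_apply]

lemma B_orth (hgInt : ∀ a b : Fin p, Integrable (fun θ : ℝ => g θ a b) ν)
    (N : ℕ) (Pc : ℕ → Matrix (Fin p) (Fin p) ℂ)
    (horth : ∀ j, j < N → ∀ a b : Fin p,
      (∫ θ, xr θ ^ j * ((∑ k ∈ Finset.range (N + 1), xr θ ^ k • Pc k)ᴴ * g θ) a b ∂ν) = 0) :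
    ∀ j, j < N → ∑ k ∈ Finset.range (N + 1), (Pc k)ᴴ * Xm ν g (j + k) = 0 := by
  intro j hj
  ext a b
  have h := horth j hj a b
  have hpt : ∀ θ, xr θ ^ j * ((∑ k ∈ Finset.range (N + 1), xr θ ^ k • Pc k)ᴴ * g θ) a b
      = ((∑ k ∈ Finset.range (N + 1), xr θ ^ (j + k) • ((Pc k)ᴴ * g θ * (1 : Matrix (Fin p) (Fin p) ℂ))) : Matrix (Fin p) (Fin p) ℂ) a b := by
    intro θ
    rw [Matrix.conjTranspose_sum]
    simp only [Matrix.conjTranspose_smul, RCLike.star_def, conj_xr_pow, Finset.sum_mul,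
      smul_mul_assoc, Matrix.sum_apply, Matrix.smul_apply, smul_eq_mul, Finset.mul_sum,
      Matrix.mul_one, pow_add]
    exact Finset.sum_congr rfl fun k _ => by ring
  have hsum := integral_w_sum_entry g (Finset.range (N + 1))
    (fun k _ => goodW_xr_pow ν (j + k)) hgInt (fun k => (Pc k)ᴴ) (fun k => 1) a b
  have hXw : ∑ k ∈ Finset.range (N+1), (Pc k)ᴴ * Xm ν g (j + k)
      = ∑ k ∈ Finset.range (N+1), (Pc k)ᴴ * wInt ν g (fun θ => xr θ ^ (j + k)) * 1 :=
    Finset.sum_congr rfl fun k _ => by rw [Matrix.mul_one]; rfl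
  rw [Matrix.zero_apply, hXw]
  calc ((∑ k ∈ Finset.range (N+1), (Pc k)ᴴ * wInt ν g (fun θ => xr θ ^ (j + k)) * 1) : Matrix (Fin p) (Fin p) ℂ) a b
      = ∫ θ, ((∑ k ∈ Finset.range (N+1), xr θ ^ (j + k) • ((Pc k)ᴴ * g θ * (1 : Matrix (Fin p) (Fin p) ℂ))) : Matrix (Fin p) (Fin p) ℂ) a b ∂ν := hsum.symm
    _ = ∫ θ, xr θ ^ j * ((∑ k ∈ Finset.range (N + 1), xr θ ^ k • Pc k)ᴴ * g θ) a b ∂ν := by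
        refine integral_congr_ae (Filter.Eventually.of_forall fun θ => ?_)
        exact (hpt θ).symm
    _ = 0 := h

lemma A_orth (hgInt : ∀ a b : Fin p, Integrable (fun θ : ℝ => g θ a b) ν)
    (N : ℕ) (Φc : ℕ → Matrix (Fin p) (Fin p) ℂ)
    (horth : ∀ j, j < N → ∀ a b : Fin p,
      (∫ θ, zc θ ^ j * ((∑ k ∈ Finset.range (N + 1), zc θ ^ k • Φc k)ᴴ * g θ) a b ∂ν) = 0) :
    ∀ j, j < N → ∑ k ∈ Finset.range (N + 1), (Φc k)ᴴ * mu ν g ((j : ℤ) - k) = 0 := by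
  intro j hj
  ext a b
  have h := horth j hj a b
  have hpt : ∀ θ, zc θ ^ j * ((∑ k ∈ Finset.range (N + 1), zc θ ^ k • Φc k)ᴴ * g θ) a b
      = ((∑ k ∈ Finset.range (N + 1), zc θ ^ ((j:ℤ) - k) • ((Φc k)ᴴ * g θ * (1 : Matrix (Fin p) (Fin p) ℂ))) : Matrix (Fin p) (Fin p) ℂ) a b := by
    intro θ
    rw [Matrix.conjTranspose_sum]
    simp only [Matrix.conjTranspose_smul, RCLike.star_def, conj_zc_pow, Finset.sum_mul,
      smul_mul_assoc, Matrix.sum_apply, Matrix.smul_apply, smul_eq_mul, Finset.mul_sum,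
      Matrix.mul_one]
    refine Finset.sum_congr rfl fun k _ => ?_
    have hzz : zc θ ^ (j:ℤ) * zc θ ^ (-(k:ℤ)) = zc θ ^ ((j:ℤ) - k) := by
      rw [sub_eq_add_neg, zpow_add₀ (zc_ne_zero θ)]
    calc zc θ ^ j * (zc θ ^ (-(k:ℤ)) * ((Φc k)ᴴ * g θ) a b)
        = (zc θ ^ (j:ℤ) * zc θ ^ (-(k:ℤ))) * ((Φc k)ᴴ * g θ) a b := by
          rw [zpow_natCast]; ring
      _ = zc θ ^ ((j:ℤ) - k) * ((Φc k)ᴴ * g θ) a b := by rw [hzz]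
  have hsum := integral_w_sum_entry g (Finset.range (N + 1))
    (fun k _ => goodW_zpow ν ((j:ℤ) - k)) hgInt (fun k => (Φc k)ᴴ) (fun k => 1) a b
  have hXw : ∑ k ∈ Finset.range (N+1), (Φc k)ᴴ * mu ν g ((j:ℤ) - k)
      = ∑ k ∈ Finset.range (N+1), (Φc k)ᴴ * wInt ν g (fun θ => zc θ ^ ((j:ℤ) - k)) * 1 :=
    Finset.sum_congr rfl fun k _ => by rw [Matrix.mul_one]; rfl
  rw [Matrix.zero_apply, hXw]
  calc ((∑ k ∈ Finset.range (N+1), (Φc k)ᴴ * wInt ν g (fun θ => zc θ ^ ((j:ℤ) - k)) * 1) : Matrix (Fin p) (Fin p) ℂ) a b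
      = ∫ θ, ((∑ k ∈ Finset.range (N+1), zc θ ^ ((j:ℤ) - k) • ((Φc k)ᴴ * g θ * (1 : Matrix (Fin p) (Fin p) ℂ))) : Matrix (Fin p) (Fin p) ℂ) a b ∂ν := hsum.symm
    _ = ∫ θ, zc θ ^ j * ((∑ k ∈ Finset.range (N + 1), zc θ ^ k • Φc k)ᴴ * g θ) a b ∂ν := by
        refine integral_congr_ae (Filter.Eventually.of_forall fun θ => ?_)
        exact (hpt θ).symm
    _ = 0 := h

lemma T_orth (hν : Measure.map (fun θ : ℝ => -θ) ν = ν) (hgsym : ∀ θ, g (-θ) = g θ)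
    (hgInt : ∀ a b : Fin p, Integrable (fun θ : ℝ => g θ a b) ν)
    (N : ℕ) (Pc : ℕ → Matrix (Fin p) (Fin p) ℂ)
    (hX : ∀ j, j < N → ∑ k ∈ Finset.range (N + 1), (Pc k)ᴴ * Xm ν g (j + k) = 0) :
    ∀ m : ℤ, |m| < N → ∑ k ∈ Finset.range (N + 1), (Pc k)ᴴ * Tm ν g m k = 0 := by
  have hnat : ∀ m' : ℕ, m' < N →
      ∑ k ∈ Finset.range (N + 1), (Pc k)ᴴ * Tm ν g (m' : ℤ) k = 0 := by
    intro m' hm'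
    have h2 : (2 : ℂ) • (∑ k ∈ Finset.range (N + 1), (Pc k)ᴴ * Tm ν g (m' : ℤ) k) = 0 := by
      rw [two_smul]
      calc (∑ k ∈ Finset.range (N + 1), (Pc k)ᴴ * Tm ν g (m' : ℤ) k)
            + (∑ k ∈ Finset.range (N + 1), (Pc k)ᴴ * Tm ν g (m' : ℤ) k)
          = ∑ k ∈ Finset.range (N + 1),
              ((Pc k)ᴴ * Tm ν g (m' : ℤ) k + (Pc k)ᴴ * Tm ν g (-(m' : ℤ)) k) := by
            rw [← Finset.sum_add_distrib]
            refine Finset.sum_congr rfl fun k _ => ?_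
            rw [← T_even g hν hgsym hgInt]
        _ = ∑ k ∈ Finset.range (N + 1),
              (Pc k)ᴴ * (Tm ν g (m' : ℤ) k + Tm ν g (-(m' : ℤ)) k) := by
            refine Finset.sum_congr rfl fun k _ => (mul_add _ _ _).symm
        _ = ∑ k ∈ Finset.range (N + 1), ∑ s ∈ Finset.range (m' + 1),
              (Polynomial.dickson 1 (1:ℂ) m').coeff s • ((Pc k)ᴴ * Xm ν g (s + k)) := by
            refine Finset.sum_congr rfl fun k _ => ?_
            rw [hTsum g hgInt, Finset.mul_sum]
            exact Finset.sum_congr rfl fun s _ => mul_smul_comm _ _ _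
        _ = ∑ s ∈ Finset.range (m' + 1),
              (Polynomial.dickson 1 (1:ℂ) m').coeff s
                • (∑ k ∈ Finset.range (N + 1), (Pc k)ᴴ * Xm ν g (s + k)) := by
            rw [Finset.sum_comm]
            exact Finset.sum_congr rfl fun s _ => (Finset.smul_sum).symm
        _ = 0 := by
            refine Finset.sum_eq_zero fun s hs => ?_
            have hsN : s < N :=
              lt_of_le_of_lt (Nat.lt_succ_iff.mp (Finset.mem_range.mp hs)) hm'
            rw [hX s hsN, smul_zero]
    have := smul_eq_zero.mp h2
    rcases this with h | h
    · exact absurd h two_ne_zero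
    · exact h
  intro m hm
  rcases Int.eq_nat_or_neg m with ⟨m', rfl | rfl⟩
  · refine hnat m' ?_
    have := hm
    rw [Int.abs_natCast] at this
    exact_mod_cast this
  · have hmm : m' < N := by
      have := hm
      rw [abs_neg, Int.abs_natCast] at this
      exact_mod_cast this
    have := hnat m' hmm
    calc ∑ k ∈ Finset.range (N + 1), (Pc k)ᴴ * Tm ν g (-(m' : ℤ)) k
        = ∑ k ∈ Finset.range (N + 1), (Pc k)ᴴ * Tm ν g (m' : ℤ) k := by
          refine Finset.sum_congr rfl fun k _ => ?_
          rw [T_even g hν hgsym hgInt, neg_neg]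
      _ = 0 := this

end
end YM

namespace YM
noncomputable section
open MeasureTheory Matrix Complex Polynomial
set_option linter.unusedSectionVars false

variable {p : ℕ} {ν : Measure ℝ} (g : ℝ → Matrix (Fin p) (Fin p) ℂ) [IsFiniteMeasure ν]

lemma int_trace (hgInt : ∀ a b : Fin p, Integrable (fun θ : ℝ => g θ a b) ν)
    (e : ℤ) (A B : Matrix (Fin p) (Fin p) ℂ) :
    Integrable (fun θ => (zc θ ^ e • (A * g θ * B)).trace) ν := by
  have heq : (fun θ => (zc θ ^ e • (A * g θ * B)).trace)
      = fun θ => ∑ a : Fin p, (zc θ ^ e • (A * g θ * B)) a a := by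
    funext θ; simp [Matrix.trace, Matrix.diag]
  rw [heq]
  exact integrable_finset_sum _ fun a _ => int_w_entry g (goodW_zpow ν e) hgInt A B a a

lemma integral_trace (hgInt : ∀ a b : Fin p, Integrable (fun θ : ℝ => g θ a b) ν)
    (e : ℤ) (A B : Matrix (Fin p) (Fin p) ℂ) :
    ∫ θ, (zc θ ^ e • (A * g θ * B)).trace ∂ν = (A * mu ν g e * B).trace := by
  have heq : (fun θ => (zc θ ^ e • (A * g θ * B)).trace)
      = fun θ => ∑ a : Fin p, (zc θ ^ e • (A * g θ * B)) a a := by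
    funext θ; simp [Matrix.trace, Matrix.diag]
  rw [heq, integral_finset_sum _ fun a _ => int_w_entry g (goodW_zpow ν e) hgInt A B a a]
  have : ∀ a ∈ (Finset.univ : Finset (Fin p)),
      (∫ θ, (zc θ ^ e • (A * g θ * B)) a a ∂ν) = (A * wInt ν g (fun θ => zc θ ^ e) * B) a a :=
    fun a _ => integral_w_entry g (goodW_zpow ν e) hgInt A B a a
  rw [Finset.sum_congr rfl this]
  simp [Matrix.trace, Matrix.diag, mu]

lemma prod_expand (C : ℕ → Matrix (Fin p) (Fin p) ℂ) (d : ℕ) (θ : ℝ) :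
    ((∑ k ∈ Finset.range (d + 1), zc θ ^ k • C k)ᴴ * g θ
        * (∑ k ∈ Finset.range (d + 1), zc θ ^ k • C k))
      = ∑ j ∈ Finset.range (d + 1), ∑ k ∈ Finset.range (d + 1),
          zc θ ^ ((k : ℤ) - j) • ((C j)ᴴ * g θ * C k) := by
  rw [Matrix.conjTranspose_sum]
  simp only [Matrix.conjTranspose_smul, RCLike.star_def, conj_zc_pow]
  rw [Finset.sum_mul, Finset.sum_mul]
  refine Finset.sum_congr rfl fun j _ => ?_
  rw [Finset.mul_sum]
  refine Finset.sum_congr rfl fun k _ => ?_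
  have he : -(j : ℤ) + k = (k : ℤ) - j := by ring
  rw [smul_mul_assoc, smul_mul_assoc, Matrix.mul_smul, smul_smul,
    ← zpow_natCast (zc θ) k, ← zpow_add₀ (zc_ne_zero θ), he, Matrix.mul_assoc]

lemma trace_int_eq (hgInt : ∀ a b : Fin p, Integrable (fun θ : ℝ => g θ a b) ν)
    (d : ℕ) (C : ℕ → Matrix (Fin p) (Fin p) ℂ) :
    (∫ θ, (((∑ k ∈ Finset.range (d + 1), zc θ ^ k • C k)ᴴ * g θ
        * (∑ k ∈ Finset.range (d + 1), zc θ ^ k • C k)).trace).re ∂ν)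
      = (∑ j ∈ Finset.range (d + 1), ∑ k ∈ Finset.range (d + 1),
          ((C j)ᴴ * mu ν g ((k : ℤ) - j) * C k).trace).re := by
  have hFeq : (fun θ => ((∑ k ∈ Finset.range (d + 1), zc θ ^ k • C k)ᴴ * g θ
        * (∑ k ∈ Finset.range (d + 1), zc θ ^ k • C k)).trace)
      = fun θ => ∑ j ∈ Finset.range (d + 1), ∑ k ∈ Finset.range (d + 1),
          (zc θ ^ ((k : ℤ) - j) • ((C j)ᴴ * g θ * C k)).trace := by
    funext θ
    rw [prod_expand g C d θ, Matrix.trace_sum]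
    exact Finset.sum_congr rfl fun j _ => Matrix.trace_sum _ _
  have hFint : Integrable (fun θ => ((∑ k ∈ Finset.range (d + 1), zc θ ^ k • C k)ᴴ * g θ
        * (∑ k ∈ Finset.range (d + 1), zc θ ^ k • C k)).trace) ν := by
    rw [hFeq]
    exact integrable_finset_sum _ fun j _ => integrable_finset_sum _ fun k _ =>
      int_trace g hgInt _ _ _
  have h1 := integral_re hFint
  simp only [RCLike.re_to_complex] at h1
  rw [h1]
  congr 1
  rw [hFeq, integral_finset_sum _ (fun j _ => integrable_finset_sum _ fun k _ =>
    int_trace g hgInt _ _ _)]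
  refine Finset.sum_congr rfl fun j _ => ?_
  rw [integral_finset_sum _ (fun k _ => int_trace g hgInt _ _ _)]
  exact Finset.sum_congr rfl fun k _ => integral_trace g hgInt _ _ _

end
end YM

namespace YM
noncomputable section
open Matrix Complex
set_option linter.unusedSectionVars false

variable {p : ℕ}

/-- coefficients of `z^n P(z+1/z) τ` (with `Q k = Pc k * τ`) -/
def Lc (n : ℕ) (Q : ℕ → Matrix (Fin p) (Fin p) ℂ) (m : ℕ) : Matrix (Fin p) (Fin p) ℂ :=
  ∑ k ∈ Finset.range (n + 1), ∑ i ∈ Finset.range (k + 1),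
    (if n + 2 * i = m + k then ((k.choose i : ℕ) : ℂ) • Q k else 0)

lemma Lc_zero (n : ℕ) (Q : ℕ → Matrix (Fin p) (Fin p) ℂ) : Lc n Q 0 = Q n := by
  unfold Lc
  rw [Finset.sum_eq_single n]
  · rw [Finset.sum_eq_single 0]
    · simp
    · intro i hi hne
      rw [if_neg (by omega)]
    · intro h
      exact absurd (Finset.mem_range.mpr (by omega)) h
  · intro k hk hne
    have hk' : k ≤ n := Nat.lt_succ_iff.mp (Finset.mem_range.mp hk)
    refine Finset.sum_eq_zero fun i hi => ?_
    have hik : i ≤ k := Nat.lt_succ_iff.mp (Finset.mem_range.mp hi)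
    rw [if_neg (by omega)]
  · intro h
    exact absurd (Finset.mem_range.mpr (by omega)) h

lemma Lc_top (n : ℕ) (Q : ℕ → Matrix (Fin p) (Fin p) ℂ) : Lc n Q (2 * n) = Q n := by
  unfold Lc
  rw [Finset.sum_eq_single n]
  · rw [Finset.sum_eq_single n]
    · rw [if_pos (by omega), Nat.choose_self]
      simp
    · intro i hi hne
      have hik : i ≤ n := Nat.lt_succ_iff.mp (Finset.mem_range.mp hi)
      rw [if_neg (by omega)]
    · intro h
      exact absurd (Finset.mem_range.mpr (by omega)) h
  · intro k hk hne
    have hk' : k ≤ n := Nat.lt_succ_iff.mp (Finset.mem_range.mp hk)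
    refine Finset.sum_eq_zero fun i hi => ?_
    have hik : i ≤ k := Nat.lt_succ_iff.mp (Finset.mem_range.mp hi)
    rw [if_neg (by omega)]
  · intro h
    exact absurd (Finset.mem_range.mpr (by omega)) h

lemma Lc_sum_z (n : ℕ) (Q : ℕ → Matrix (Fin p) (Fin p) ℂ) (z : ℂ) (hz : z ≠ 0) :
    ∑ m ∈ Finset.range (2 * n + 1), z ^ m • Lc n Q m
      = z ^ n • ∑ k ∈ Finset.range (n + 1), (z + z⁻¹) ^ k • Q k := by
  have hrhs : z ^ n • ∑ k ∈ Finset.range (n + 1), (z + z⁻¹) ^ k • Q k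
      = ∑ k ∈ Finset.range (n + 1), ∑ i ∈ Finset.range (k + 1),
          z ^ (n + 2 * i - k) • (((k.choose i : ℕ) : ℂ) • Q k) := by
    rw [Finset.smul_sum]
    refine Finset.sum_congr rfl fun k hk => ?_
    have hkn : k ≤ n := Nat.lt_succ_iff.mp (Finset.mem_range.mp hk)
    rw [add_pow, Finset.sum_smul, Finset.smul_sum]
    refine Finset.sum_congr rfl fun i hi => ?_
    have hik : i ≤ k := Nat.lt_succ_iff.mp (Finset.mem_range.mp hi)
    rw [smul_smul, smul_smul]
    congr 1
    have hpow : z ^ (n + 2 * i - k) = z ^ n * (z ^ i * (z⁻¹) ^ (k - i)) := by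
      rw [inv_pow]
      field_simp
      rw [← pow_add, ← pow_add]
      congr 1
      omega
    rw [hpow]
    ring
  rw [hrhs]
  unfold Lc
  simp only [Finset.smul_sum]
  rw [Finset.sum_comm]
  refine Finset.sum_congr rfl fun k hk => ?_
  have hkn : k ≤ n := Nat.lt_succ_iff.mp (Finset.mem_range.mp hk)
  rw [Finset.sum_comm]
  refine Finset.sum_congr rfl fun i hi => ?_
  have hik : i ≤ k := Nat.lt_succ_iff.mp (Finset.mem_range.mp hi)
  have hcond : ∀ m : ℕ, (n + 2 * i = m + k) ↔ (m = n + 2 * i - k) := by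
    intro m; omega
  calc ∑ m ∈ Finset.range (2 * n + 1),
        z ^ m • (if n + 2 * i = m + k then ((k.choose i : ℕ) : ℂ) • Q k else 0)
      = ∑ m ∈ Finset.range (2 * n + 1),
          (if m = n + 2 * i - k then z ^ m • (((k.choose i : ℕ) : ℂ) • Q k) else 0) := by
        refine Finset.sum_congr rfl fun m _ => ?_
        rw [smul_ite, smul_zero]
        congr 1
        · exact propext (hcond m)
    _ = z ^ (n + 2 * i - k) • (((k.choose i : ℕ) : ℂ) • Q k) := by
        rw [Finset.sum_ite_eq' (Finset.range (2 * n + 1))]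
        rw [if_pos (Finset.mem_range.mpr (by omega))]

lemma rev_sum (N : ℕ) (Φc : ℕ → Matrix (Fin p) (Fin p) ℂ) (z : ℂ) (hz : z ≠ 0) :
    ∑ m ∈ Finset.range (N + 1), z ^ m • Φc (N - m)
      = z ^ N • ∑ k ∈ Finset.range (N + 1), (z⁻¹) ^ k • Φc k := by
  rw [← Finset.sum_range_reflect]
  rw [Finset.smul_sum]
  refine Finset.sum_congr rfl fun m hm => ?_
  have hmN : m ≤ N := Nat.lt_succ_iff.mp (Finset.mem_range.mp hm)
  simp only [Nat.add_sub_cancel]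
  have h1 : N - (N - m) = m := by omega
  rw [h1, smul_smul]
  congr 1
  rw [inv_pow, eq_comm, mul_inv_eq_iff_eq_mul₀ (pow_ne_zero _ hz), ← pow_add]
  congr 1
  omega

lemma factor_V (V : Matrix (Fin p) (Fin p) ℂ) (hVH : Vᴴ = V)
    (M : ℕ → Matrix (Fin p) (Fin p) ℂ) (μf : ℤ → Matrix (Fin p) (Fin p) ℂ)
    (s : Finset ℕ) (k : ℤ) :
    ∑ j ∈ s, (M j * V)ᴴ * μf (k - j) = V * ∑ j ∈ s, (M j)ᴴ * μf (k - j) := by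
  rw [Finset.mul_sum]
  refine Finset.sum_congr rfl fun j _ => ?_
  rw [Matrix.conjTranspose_mul, hVH, Matrix.mul_assoc]

lemma double_trace_zero (μf : ℤ → Matrix (Fin p) (Fin p) ℂ)
    (C : ℕ → Matrix (Fin p) (Fin p) ℂ) (d : ℕ)
    (h : ∀ k, k ≤ d → (∑ j ∈ Finset.range (d + 1), (C j)ᴴ * μf ((k : ℤ) - j)) * C k = 0) :
    ∑ j ∈ Finset.range (d + 1), ∑ k ∈ Finset.range (d + 1),
      ((C j)ᴴ * μf ((k : ℤ) - j) * C k).trace = 0 := by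
  rw [Finset.sum_comm]
  refine Finset.sum_eq_zero fun k hk => ?_
  have hkd : k ≤ d := Nat.lt_succ_iff.mp (Finset.mem_range.mp hk)
  have : ∑ j ∈ Finset.range (d + 1), ((C j)ᴴ * μf ((k : ℤ) - j) * C k).trace
      = ((∑ j ∈ Finset.range (d + 1), (C j)ᴴ * μf ((k : ℤ) - j)) * C k).trace := by
    rw [Finset.sum_mul, Matrix.trace_sum]
  rw [this, h k hkd, Matrix.trace_zero]

lemma Lc_pair (n : ℕ) (Q : ℕ → Matrix (Fin p) (Fin p) ℂ)
    (μf : ℤ → Matrix (Fin p) (Fin p) ℂ) (k : ℤ) :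
    ∑ j ∈ Finset.range (2 * n + 1), (Lc n Q j)ᴴ * μf (k - j)
      = ∑ k' ∈ Finset.range (n + 1), ∑ i ∈ Finset.range (k' + 1),
          ((k'.choose i : ℕ) : ℂ) • ((Q k')ᴴ * μf (k - n + k' - 2 * i)) := by
  have hLH : ∀ j, (Lc n Q j)ᴴ = ∑ k' ∈ Finset.range (n + 1), ∑ i ∈ Finset.range (k' + 1),
      (if n + 2 * i = j + k' then ((k'.choose i : ℕ) : ℂ) • (Q k')ᴴ else 0) := by
    intro j
    unfold Lc
    rw [Matrix.conjTranspose_sum]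
    refine Finset.sum_congr rfl fun k' _ => ?_
    rw [Matrix.conjTranspose_sum]
    refine Finset.sum_congr rfl fun i _ => ?_
    rw [apply_ite Matrix.conjTranspose, Matrix.conjTranspose_zero, Matrix.conjTranspose_smul,
      star_natCast]
  simp only [hLH, Finset.sum_mul]
  rw [Finset.sum_comm]
  refine Finset.sum_congr rfl fun k' hk' => ?_
  have hk'n : k' ≤ n := Nat.lt_succ_iff.mp (Finset.mem_range.mp hk')
  rw [Finset.sum_comm]
  refine Finset.sum_congr rfl fun i hi => ?_
  have hik : i ≤ k' := Nat.lt_succ_iff.mp (Finset.mem_range.mp hi)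
  have hcond : ∀ j : ℕ, (n + 2 * i = j + k') ↔ (j = n + 2 * i - k') := by
    intro j; omega
  calc ∑ j ∈ Finset.range (2 * n + 1),
        (if n + 2 * i = j + k' then ((k'.choose i : ℕ) : ℂ) • (Q k')ᴴ else 0) * μf (k - j)
      = ∑ j ∈ Finset.range (2 * n + 1),
          (if j = n + 2 * i - k' then (((k'.choose i : ℕ) : ℂ) • (Q k')ᴴ) * μf (k - j) else 0) := by
        refine Finset.sum_congr rfl fun j _ => ?_
        rw [ite_mul, zero_mul]
        congr 1
        exact propext (hcond j)
    _ = (((k'.choose i : ℕ) : ℂ) • (Q k')ᴴ) * μf (k - (n + 2 * i - k' : ℕ)) := by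
        rw [Finset.sum_ite_eq' (Finset.range (2 * n + 1))]
        rw [if_pos (Finset.mem_range.mpr (by omega))]
    _ = ((k'.choose i : ℕ) : ℂ) • ((Q k')ᴴ * μf (k - n + k' - 2 * i)) := by
        rw [smul_mul_assoc]
        congr 2
        have : ((n + 2 * i - k' : ℕ) : ℤ) = (n : ℤ) + 2 * i - k' := by omega
        rw [this]
        ring

lemma alg_main (n : ℕ) (Φc : ℕ → Matrix (Fin p) (Fin p) ℂ)
    (Q : ℕ → Matrix (Fin p) (Fin p) ℂ) (z : ℂ) (hz : z ≠ 0) :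
    ∑ m ∈ Finset.range (2 * n + 1), z ^ m • (Φc m + Φc (2 * n - m) - Lc n Q m)
      = (∑ k ∈ Finset.range (2 * n + 1), z ^ k • Φc k)
        + z ^ (2 * n) • (∑ k ∈ Finset.range (2 * n + 1), (z⁻¹) ^ k • Φc k)
        - z ^ n • (∑ k ∈ Finset.range (n + 1), (z + z⁻¹) ^ k • Q k) := by
  have : ∀ m ∈ Finset.range (2 * n + 1),
      z ^ m • (Φc m + Φc (2 * n - m) - Lc n Q m)
        = z ^ m • Φc m + z ^ m • Φc (2 * n - m) - z ^ m • Lc n Q m := by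
    intro m _
    rw [smul_sub, smul_add]
  rw [Finset.sum_congr rfl this, Finset.sum_sub_distrib, Finset.sum_add_distrib]
  rw [rev_sum (2 * n) Φc z hz, Lc_sum_z n Q z hz]

end
end YM

namespace YM
noncomputable section
open MeasureTheory Matrix Complex
set_option linter.unusedSectionVars false

variable {p : ℕ} {ν : Measure ℝ} (g : ℝ → Matrix (Fin p) (Fin p) ℂ) [IsFiniteMeasure ν]

lemma A_orth_rev (hν : Measure.map (fun θ : ℝ => -θ) ν = ν) (hgsym : ∀ θ, g (-θ) = g θ)
    (hgInt : ∀ a b : Fin p, Integrable (fun θ : ℝ => g θ a b) ν)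
    (N : ℕ) (Φc : ℕ → Matrix (Fin p) (Fin p) ℂ)
    (hA : ∀ j, j < N → ∑ k ∈ Finset.range (N + 1), (Φc k)ᴴ * mu ν g ((j : ℤ) - k) = 0) :
    ∀ k : ℕ, 1 ≤ k → k ≤ N →
      ∑ j ∈ Finset.range (N + 1), (Φc (N - j))ᴴ * mu ν g ((k : ℤ) - j) = 0 := by
  intro k h1 h2
  have hA' := hA (N - k) (by omega)
  calc ∑ j ∈ Finset.range (N + 1), (Φc (N - j))ᴴ * mu ν g ((k : ℤ) - j)
      = ∑ j ∈ Finset.range (N + 1), (Φc j)ᴴ * mu ν g (((N - k : ℕ) : ℤ) - j) := by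
        rw [← Finset.sum_range_reflect]
        refine Finset.sum_congr rfl fun j hj => ?_
        have hjN : j ≤ N := Nat.lt_succ_iff.mp (Finset.mem_range.mp hj)
        simp only [Nat.add_sub_cancel]
        have e1 : N - (N - j) = j := by omega
        rw [e1, mu_even g hν hgsym hgInt]
        have e2 : -((k:ℤ) - ((N - j : ℕ) : ℤ)) = ((N - k : ℕ) : ℤ) - (j : ℤ) := by omega
        rw [e2]
    _ = 0 := hA'

end
end YM


/-- Yakhlef–Marcellán: for a symmetric nontrivial matrix measure on the unit circle
(represented in angle coordinates by a finite symmetric measure `ν` with positive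
semidefinite matrix density `g`), the monic orthogonal matrix polynomials `P̂_n` of
the Szegő image on `[-2,2]` and the monic orthogonal matrix polynomials `Φ_{2n}` on
the circle satisfy `P̂_n(z+z⁻¹) = [z^{-n} Φ_{2n}(z) + z^{n} Φ_{2n}(z⁻¹)] τ_n⁻¹`,
where `τ_n = 1 + Φ_{2n}(0)`. -/
theorem yakhlef_marcellan (p n : ℕ)
    (ν : Measure ℝ) [IsFiniteMeasure ν]
    (hν : Measure.map (fun θ : ℝ => -θ) ν = ν)
    (g : ℝ → Matrix (Fin p) (Fin p) ℂ)
    (hgPSD : ∀ θ : ℝ, (g θ).PosSemidef)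
    (hgsym : ∀ θ : ℝ, g (-θ) = g θ)
    (hgInt : ∀ a b : Fin p, Integrable (fun θ : ℝ => g θ a b) ν)
    -- nontriviality of the measure on the circle
    (hnontriv : ∀ (d : ℕ) (C : ℕ → Matrix (Fin p) (Fin p) ℂ), (∃ k, k ≤ d ∧ C k ≠ 0) →
      0 < ∫ θ : ℝ,
        ((((∑ k ∈ Finset.range (d + 1), Complex.exp (θ * Complex.I) ^ k • C k)ᴴ * g θ
          * (∑ k ∈ Finset.range (d + 1), Complex.exp (θ * Complex.I) ^ k • C k)).trace).re) ∂ν)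
    -- monic matrix polynomials on the circle and on the real line, via coefficients
    (Φc Pc : ℕ → ℕ → Matrix (Fin p) (Fin p) ℂ)
    (hΦmonic : ∀ m, Φc m m = 1 ∧ ∀ k, m < k → Φc m k = 0)
    (hPmonic : ∀ m, Pc m m = 1 ∧ ∀ k, m < k → Pc m k = 0)
    (Φ P : ℕ → ℂ → Matrix (Fin p) (Fin p) ℂ)
    (hΦ : ∀ m z, Φ m z = ∑ k ∈ Finset.range (m + 1), z ^ k • Φc m k)
    (hP : ∀ m x, P m x = ∑ k ∈ Finset.range (m + 1), x ^ k • Pc m k)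
    -- right orthogonality of `Φ_m` to `z^j 1`, `j < m`, with respect to the circle measure
    (hΦorth : ∀ m, ∀ j < m, ∀ a b : Fin p,
      (∫ θ : ℝ, (Complex.exp (θ * Complex.I) ^ j
        * ((Φ m (Complex.exp (θ * Complex.I)))ᴴ * g θ) a b) ∂ν) = 0)
    -- right orthogonality of `P̂_m` to `x^j 1`, `j < m`, with respect to the image measure
    (hPorth : ∀ m, ∀ j < m, ∀ a b : Fin p,
      (∫ θ : ℝ, (((2 * Real.cos θ : ℝ) : ℂ) ^ j
        * ((P m ((2 * Real.cos θ : ℝ) : ℂ))ᴴ * g θ) a b) ∂ν) = 0) :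
    ∀ z : ℂ, z ≠ 0 →
      P n (z + z⁻¹)
        = (z ^ (-(n : ℤ)) • Φ (2 * n) z + z ^ ((n : ℤ)) • Φ (2 * n) z⁻¹)
          * ((1 : Matrix (Fin p) (Fin p) ℂ) + Φ (2 * n) 0)⁻¹ := by
  intro z hz
  -- value of Φ at 0
  have hΦzero : Φ (2 * n) 0 = Φc (2 * n) 0 := by
    rw [hΦ]
    rw [Finset.sum_eq_single 0]
    · simp
    · intro k _ hkne
      rw [zero_pow hkne, zero_smul]
    · intro h
      exact absurd (Finset.mem_range.mpr (by omega)) h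
  rw [hΦzero]
  set τ : Matrix (Fin p) (Fin p) ℂ := 1 + Φc (2 * n) 0 with hτdef
  set μf : ℤ → Matrix (Fin p) (Fin p) ℂ := YM.mu ν g with hμf
  -- zero-coefficient extraction from nontriviality
  have hzero : ∀ (d : ℕ) (C : ℕ → Matrix (Fin p) (Fin p) ℂ),
      (∑ j ∈ Finset.range (d + 1), ∑ k ∈ Finset.range (d + 1),
        ((C j)ᴴ * μf ((k : ℤ) - j) * C k).trace) = 0 →
      ∀ k, k ≤ d → C k = 0 := by
    intro d C hsum k hk
    by_contra hne
    have hpos : 0 < ∫ θ : ℝ,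
        ((((∑ k ∈ Finset.range (d + 1), YM.zc θ ^ k • C k)ᴴ * g θ
          * (∑ k ∈ Finset.range (d + 1), YM.zc θ ^ k • C k)).trace).re) ∂ν :=
      hnontriv d C ⟨k, hk, hne⟩
    have heq := YM.trace_int_eq g hgInt d C
    rw [hμf] at hsum
    rw [hsum] at heq
    rw [heq] at hpos
    simp at hpos
  -- moment orthogonality for Φ
  have hA : ∀ j, j < 2 * n →
      ∑ k ∈ Finset.range (2 * n + 1), (Φc (2 * n) k)ᴴ * μf ((j : ℤ) - k) = 0 := by
    rw [hμf]
    apply YM.A_orth g hgInt (2 * n) (Φc (2 * n))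
    intro j hj a b
    have horig := hΦorth (2 * n) j hj a b
    have heqf : (∫ θ, YM.zc θ ^ j
          * ((∑ k ∈ Finset.range (2 * n + 1), YM.zc θ ^ k • Φc (2 * n) k)ᴴ * g θ) a b ∂ν)
        = ∫ θ, Complex.exp (θ * Complex.I) ^ j
            * ((Φ (2 * n) (Complex.exp (θ * Complex.I)))ᴴ * g θ) a b ∂ν := by
      refine integral_congr_ae (Filter.Eventually.of_forall fun θ => ?_)
      show YM.zc θ ^ j * ((∑ k ∈ Finset.range (2 * n + 1), YM.zc θ ^ k • Φc (2 * n) k)ᴴ * g θ) a b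
        = YM.zc θ ^ j * ((Φ (2 * n) (YM.zc θ))ᴴ * g θ) a b
      rw [hΦ]
    rw [heqf]
    exact horig
  have hArev : ∀ k : ℕ, 1 ≤ k → k ≤ 2 * n →
      ∑ j ∈ Finset.range (2 * n + 1), (Φc (2 * n) (2 * n - j))ᴴ * μf ((k : ℤ) - j) = 0 := by
    rw [hμf]
    apply YM.A_orth_rev g hν hgsym hgInt (2 * n) (Φc (2 * n))
    intro j hj
    have := hA j hj
    rwa [hμf] at this
  -- moment orthogonality for P
  have hB : ∀ j, j < n →
      ∑ k ∈ Finset.range (n + 1), (Pc n k)ᴴ * YM.Xm ν g (j + k) = 0 := by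
    apply YM.B_orth g hgInt n (Pc n)
    intro j hj a b
    have horig := hPorth n j hj a b
    have heqf : (∫ θ, YM.xr θ ^ j
          * ((∑ k ∈ Finset.range (n + 1), YM.xr θ ^ k • Pc n k)ᴴ * g θ) a b ∂ν)
        = ∫ θ, ((2 * Real.cos θ : ℝ) : ℂ) ^ j
            * ((P n ((2 * Real.cos θ : ℝ) : ℂ))ᴴ * g θ) a b ∂ν := by
      refine integral_congr_ae (Filter.Eventually.of_forall fun θ => ?_)
      show YM.xr θ ^ j * ((∑ k ∈ Finset.range (n + 1), YM.xr θ ^ k • Pc n k)ᴴ * g θ) a b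
        = YM.xr θ ^ j * ((P n (YM.xr θ))ᴴ * g θ) a b
      rw [hP]
    rw [heqf]
    exact horig
  have hTor : ∀ m : ℤ, |m| < n →
      ∑ k' ∈ Finset.range (n + 1), (Pc n k')ᴴ * YM.Tm ν g m k' = 0 :=
    YM.T_orth g hν hgsym hgInt n (Pc n) hB
  -- invertibility of τ
  have hτdet : IsUnit τ.det := by
    rcases Nat.eq_zero_or_pos n with hn | hn
    · have hΦc00 : Φc (2 * n) 0 = 1 := by
        rw [hn]; exact (hΦmonic 0).1
      rw [hτdef, hΦc00, ← two_smul ℂ (1 : Matrix (Fin p) (Fin p) ℂ), Matrix.det_smul,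
        Matrix.det_one, mul_one]
      exact isUnit_iff_ne_zero.mpr (pow_ne_zero _ two_ne_zero)
    · by_contra hno
      have hdet0 : τ.det = 0 := by rwa [isUnit_iff_ne_zero, not_not] at hno
      obtain ⟨v, hv0, hvτ⟩ := Matrix.exists_mulVec_eq_zero_iff.mpr hdet0
      set V : Matrix (Fin p) (Fin p) ℂ :=
        Matrix.of (fun a b => v a * (starRingEnd ℂ) (v b)) with hVdef
      have hVH : Vᴴ = V := by
        ext a b
        simp [hVdef, Matrix.conjTranspose_apply, mul_comm]
      have hVne : V ≠ 0 := by
        obtain ⟨a, ha⟩ := Function.ne_iff.mp hv0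
        rw [Pi.zero_apply] at ha
        intro h0
        have hcc := congrFun (congrFun h0 a) a
        rw [Matrix.zero_apply] at hcc
        have : v a * (starRingEnd ℂ) (v a) = 0 := hcc
        rcases mul_eq_zero.mp this with h | h
        · exact ha h
        · rw [starRingEnd_apply, star_eq_zero] at h
          exact ha h
      have hMV : ∀ M : Matrix (Fin p) (Fin p) ℂ, M.mulVec v = 0 → M * V = 0 := by
        intro M hM
        ext a b
        have h1 : (M * V) a b = (M.mulVec v a) * (starRingEnd ℂ) (v b) := by
          simp [hVdef, Matrix.mul_apply, Matrix.mulVec, dotProduct,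
            Finset.sum_mul, mul_assoc]
        rw [h1, hM]
        simp
      have hτV : τ * V = 0 := hMV τ hvτ
      -- branch 1: the symmetrized coefficients annihilate V
      set Kf : ℕ → Matrix (Fin p) (Fin p) ℂ :=
        fun m => (Φc (2 * n) m + Φc (2 * n) (2 * n - m)) * V with hKfdef
      have hK0 : Kf 0 = 0 := by
        show (Φc (2 * n) 0 + Φc (2 * n) (2 * n - 0)) * V = 0
        rw [Nat.sub_zero, (hΦmonic (2 * n)).1]
        have h1 : Φc (2 * n) 0 + 1 = τ := by rw [hτdef, add_comm]
        rw [h1, hτV]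
      have hKN : Kf (2 * n) = 0 := by
        show (Φc (2 * n) (2 * n) + Φc (2 * n) (2 * n - 2 * n)) * V = 0
        rw [Nat.sub_self, (hΦmonic (2 * n)).1, ← hτdef, hτV]
      have hKsum : ∑ j ∈ Finset.range (2 * n + 1), ∑ k ∈ Finset.range (2 * n + 1),
          ((Kf j)ᴴ * μf ((k : ℤ) - j) * Kf k).trace = 0 := by
        apply YM.double_trace_zero
        intro k hk
        by_cases hk0 : k = 0
        · rw [hk0, hK0, mul_zero]
        by_cases hkN : k = 2 * n
        · rw [hkN, hKN, mul_zero]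
        have hk1 : 1 ≤ k := by omega
        have hk2 : k ≤ 2 * n := by omega
        have hkl : k < 2 * n := by omega
        have hfac : ∑ j ∈ Finset.range (2 * n + 1), (Kf j)ᴴ * μf ((k : ℤ) - j)
            = V * ∑ j ∈ Finset.range (2 * n + 1),
                (Φc (2 * n) j + Φc (2 * n) (2 * n - j))ᴴ * μf ((k : ℤ) - j) :=
          YM.factor_V V hVH (fun j => Φc (2 * n) j + Φc (2 * n) (2 * n - j)) μf _ _
        rw [hfac]
        have hsplit : ∑ j ∈ Finset.range (2 * n + 1),
            (Φc (2 * n) j + Φc (2 * n) (2 * n - j))ᴴ * μf ((k : ℤ) - j)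
            = (∑ j ∈ Finset.range (2 * n + 1), (Φc (2 * n) j)ᴴ * μf ((k : ℤ) - j))
              + ∑ j ∈ Finset.range (2 * n + 1), (Φc (2 * n) (2 * n - j))ᴴ * μf ((k : ℤ) - j) := by
          rw [← Finset.sum_add_distrib]
          refine Finset.sum_congr rfl fun j _ => ?_
          rw [Matrix.conjTranspose_add, Matrix.add_mul]
        rw [hsplit, hA k hkl, hArev k hk1 hk2, add_zero, mul_zero, zero_mul]
      have hKall : ∀ m, m ≤ 2 * n → Kf m = 0 := hzero (2 * n) Kf hKsum
      -- branch 2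
      set Uf : ℕ → Matrix (Fin p) (Fin p) ℂ := fun m => Φc (2 * n) m * V with hUfdef
      have hUsum : ∑ j ∈ Finset.range (2 * n + 1), ∑ k ∈ Finset.range (2 * n + 1),
          ((Uf j)ᴴ * μf ((k : ℤ) - j) * Uf k).trace = 0 := by
        apply YM.double_trace_zero
        intro k hk
        rcases Nat.lt_or_ge k (2 * n) with hkl | hkg
        · have hfac : ∑ j ∈ Finset.range (2 * n + 1), (Uf j)ᴴ * μf ((k : ℤ) - j)
              = V * ∑ j ∈ Finset.range (2 * n + 1), (Φc (2 * n) j)ᴴ * μf ((k : ℤ) - j) :=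
            YM.factor_V V hVH (fun j => Φc (2 * n) j) μf _ _
          rw [hfac, hA k hkl, mul_zero, zero_mul]
        · have hkN : k = 2 * n := by omega
          subst hkN
          have hU2 : ∀ j, j ≤ 2 * n → Uf j = -(Φc (2 * n) (2 * n - j) * V) := by
            intro j hj
            have hKj := hKall j hj
            have hexp : Kf j = Φc (2 * n) j * V + Φc (2 * n) (2 * n - j) * V := by
              show (Φc (2 * n) j + Φc (2 * n) (2 * n - j)) * V = _
              rw [Matrix.add_mul]
            rw [hexp] at hKj
            show Φc (2 * n) j * V = _
            linear_combination (norm := abel) hKj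
          have hstep : ∑ j ∈ Finset.range (2 * n + 1), (Uf j)ᴴ * μf ((2 * n : ℕ) - (j : ℤ))
              = -(V * ∑ j ∈ Finset.range (2 * n + 1),
                  (Φc (2 * n) (2 * n - j))ᴴ * μf (((2 * n : ℕ) : ℤ) - j)) := by
            rw [← YM.factor_V V hVH (fun j => Φc (2 * n) (2 * n - j)) μf _ _,
              ← Finset.sum_neg_distrib]
            refine Finset.sum_congr rfl fun j hj => ?_
            have hjN : j ≤ 2 * n := Nat.lt_succ_iff.mp (Finset.mem_range.mp hj)
            rw [hU2 j hjN, Matrix.conjTranspose_neg, Matrix.neg_mul]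
          rw [hstep, hArev (2 * n) (by omega) le_rfl, mul_zero, neg_zero, zero_mul]
      have hUall : ∀ m, m ≤ 2 * n → Uf m = 0 := hzero (2 * n) Uf hUsum
      have hUtop := hUall (2 * n) le_rfl
      rw [hUfdef] at hUtop
      simp only at hUtop
      rw [(hΦmonic (2 * n)).1, Matrix.one_mul] at hUtop
      exact hVne hUtop
  -- the difference polynomial coefficients
  set Q : ℕ → Matrix (Fin p) (Fin p) ℂ := fun k => Pc n k * τ with hQdef
  set Dc : ℕ → Matrix (Fin p) (Fin p) ℂ :=
    fun m => Φc (2 * n) m + Φc (2 * n) (2 * n - m) - YM.Lc n Q m with hDcdef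
  have hQn : Q n = τ := by
    show Pc n n * τ = τ
    rw [(hPmonic n).1, Matrix.one_mul]
  have hD0 : Dc 0 = 0 := by
    show Φc (2 * n) 0 + Φc (2 * n) (2 * n - 0) - YM.Lc n Q 0 = 0
    rw [Nat.sub_zero, (hΦmonic (2 * n)).1, YM.Lc_zero, hQn, hτdef]
    abel
  have hDN : Dc (2 * n) = 0 := by
    show Φc (2 * n) (2 * n) + Φc (2 * n) (2 * n - 2 * n) - YM.Lc n Q (2 * n) = 0
    rw [Nat.sub_self, (hΦmonic (2 * n)).1, YM.Lc_top, hQn, hτdef]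
    abel
  have hE : ∀ k : ℕ, 1 ≤ k → k ≤ 2 * n - 1 →
      ∑ j ∈ Finset.range (2 * n + 1), (Dc j)ᴴ * μf ((k : ℤ) - j) = 0 := by
    intro k hk1 hk2
    have hsplit : ∑ j ∈ Finset.range (2 * n + 1), (Dc j)ᴴ * μf ((k : ℤ) - j)
        = ((∑ j ∈ Finset.range (2 * n + 1), (Φc (2 * n) j)ᴴ * μf ((k : ℤ) - j))
            + ∑ j ∈ Finset.range (2 * n + 1), (Φc (2 * n) (2 * n - j))ᴴ * μf ((k : ℤ) - j))
          - ∑ j ∈ Finset.range (2 * n + 1), (YM.Lc n Q j)ᴴ * μf ((k : ℤ) - j) := by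
      rw [← Finset.sum_add_distrib, ← Finset.sum_sub_distrib]
      refine Finset.sum_congr rfl fun j _ => ?_
      show (Φc (2 * n) j + Φc (2 * n) (2 * n - j) - YM.Lc n Q j)ᴴ * μf ((k : ℤ) - j) = _
      rw [Matrix.conjTranspose_sub, Matrix.conjTranspose_add, Matrix.sub_mul, Matrix.add_mul]
    rw [hsplit, hA k (by omega), hArev k hk1 (by omega), add_zero]
    have hTm : ∀ k' : ℕ, YM.Tm ν g ((k : ℤ) - n) k'
        = ∑ i ∈ Finset.range (k' + 1),
            ((k'.choose i : ℕ) : ℂ) • μf ((k : ℤ) - n + k' - 2 * i) := by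
      intro k'
      unfold YM.Tm
      rw [← hμf]
    have hLc : ∑ j ∈ Finset.range (2 * n + 1), (YM.Lc n Q j)ᴴ * μf ((k : ℤ) - j)
        = τᴴ * ∑ k' ∈ Finset.range (n + 1), (Pc n k')ᴴ * YM.Tm ν g ((k : ℤ) - n) k' := by
      rw [YM.Lc_pair n Q μf (k : ℤ), Finset.mul_sum]
      refine Finset.sum_congr rfl fun k' _ => ?_
      rw [hTm k', Finset.mul_sum, Finset.mul_sum]
      refine Finset.sum_congr rfl fun i _ => ?_
      rw [mul_smul_comm, mul_smul_comm]
      congr 1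
      have hQH : (Q k')ᴴ = τᴴ * (Pc n k')ᴴ := by
        show (Pc n k' * τ)ᴴ = _
        rw [Matrix.conjTranspose_mul]
      rw [hQH, Matrix.mul_assoc]
    have habs : |(k : ℤ) - n| < n := by
      rw [abs_lt]
      omega
    rw [hLc, hTor ((k : ℤ) - n) habs, mul_zero, zero_sub, neg_zero]
  have hDsum : ∑ j ∈ Finset.range (2 * n + 1), ∑ k ∈ Finset.range (2 * n + 1),
      ((Dc j)ᴴ * μf ((k : ℤ) - j) * Dc k).trace = 0 := by
    apply YM.double_trace_zero
    intro k hk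
    by_cases hk0 : k = 0
    · rw [hk0, hD0, mul_zero]
    by_cases hkN : k = 2 * n
    · rw [hkN, hDN, mul_zero]
    rw [hE k (by omega) (by omega), zero_mul]
  have hDall : ∀ m, m ≤ 2 * n → Dc m = 0 := hzero (2 * n) Dc hDsum
  have hsum0 : ∑ m ∈ Finset.range (2 * n + 1),
      z ^ m • (Φc (2 * n) m + Φc (2 * n) (2 * n - m) - YM.Lc n Q m) = 0 := by
    refine Finset.sum_eq_zero fun m hm => ?_
    have hd := hDall m (Nat.lt_succ_iff.mp (Finset.mem_range.mp hm))
    rw [hDcdef] at hd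
    simp only at hd
    rw [hd, smul_zero]
  have halg := YM.alg_main n (Φc (2 * n)) Q z hz
  rw [hsum0] at halg
  have hC : z ^ n • (∑ k ∈ Finset.range (n + 1), (z + z⁻¹) ^ k • Q k)
      = (∑ k ∈ Finset.range (2 * n + 1), z ^ k • Φc (2 * n) k)
        + z ^ (2 * n) • (∑ k ∈ Finset.range (2 * n + 1), (z⁻¹) ^ k • Φc (2 * n) k) :=
    (sub_eq_zero.mp halg.symm).symm
  have hPQ : ∑ k ∈ Finset.range (n + 1), (z + z⁻¹) ^ k • Q k = P n (z + z⁻¹) * τ := by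
    rw [hP, Finset.sum_mul]
    simp only [hQdef, smul_mul_assoc]
  have hΦz : ∑ k ∈ Finset.range (2 * n + 1), z ^ k • Φc (2 * n) k = Φ (2 * n) z :=
    (hΦ _ _).symm
  have hΦzi : ∑ k ∈ Finset.range (2 * n + 1), (z⁻¹) ^ k • Φc (2 * n) k = Φ (2 * n) z⁻¹ :=
    (hΦ _ _).symm
  rw [hPQ, hΦz, hΦzi] at hC
  have hcomb : z ^ (-(n : ℤ)) • Φ (2 * n) z + z ^ ((n : ℤ)) • Φ (2 * n) z⁻¹
      = P n (z + z⁻¹) * τ := by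
    have hid : z ^ ((n : ℤ)) = z ^ (-(n : ℤ)) * z ^ (2 * n : ℕ) := by
      rw [← zpow_natCast z (2 * n), ← zpow_add₀ hz]
      congr 1
      push_cast
      ring
    calc z ^ (-(n : ℤ)) • Φ (2 * n) z + z ^ ((n : ℤ)) • Φ (2 * n) z⁻¹
        = z ^ (-(n : ℤ)) • (Φ (2 * n) z + z ^ (2 * n : ℕ) • Φ (2 * n) z⁻¹) := by
          rw [smul_add, smul_smul, ← hid]
      _ = z ^ (-(n : ℤ)) • (z ^ n • (P n (z + z⁻¹) * τ)) := by rw [← hC]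
      _ = P n (z + z⁻¹) * τ := by
          rw [smul_smul, ← zpow_natCast z n, ← zpow_add₀ hz, neg_add_cancel, zpow_zero, one_smul]
  rw [hcomb, Matrix.mul_assoc, Matrix.mul_nonsing_inv τ hτdet, Matrix.mul_one]
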